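/- If a vertex v of T has exactly 6 neighbours, then these neighbours are six equidistant points forming a regular hexagon around v: they can be ordered n₁, …, n₆ so that for some ρ > 0, dist(v, nᵢ) = ρ for all i and dist(nᵢ, n_{i+1}) = ρ for all i (indices modulo 6), i.e., consecutive neighbours subtend an angle of exactly π/3 at v. -/

import Mathlib

/-- A rooted tree on a vertex type `V`, given by a parent function under which
every vertex reaches the root. -/
structure ParentTree (V : Type) where
  root : V
  parent : V → V
  parent_root : parent root = root
  reaches_root : ∀ v, ∃ k, parent^[k] v = root

namespace ParentTree

variable {V : Type}

/-- The set `C(u)` of children of `u`. -/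
def children (T : ParentTree V) (u : V) : Set V := {v | T.parent v = u ∧ v ≠ u}

/-- The set `T(u)` of descendants of `u` (including `u` itself). -/
def desc (T : ParentTree V) (u : V) : Set V := {b | ∃ k, T.parent^[k] b = u}

/-- For a set `U` of siblings, `T(U) = ⋃_{u ∈ U} T(u)`. -/
def descU (T : ParentTree V) (U : Set V) : Set V := ⋃ u ∈ U, T.desc u

end ParentTree

/-- The total weight of the tree `T`: the sum of distances over its edges. -/
noncomputable def treeWeight {V X : Type} [Fintype V] [DecidableEq V] [MetricSpace X]
    (T : ParentTree V) (f : V → X) : ℝ :=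
  ∑ v ∈ Finset.univ.filter (fun v => v ≠ T.root), dist (f v) (f (T.parent v))

/-- `T` is a minimum spanning tree: among all trees with the same vertex set it
minimizes the sum of distances over its edges. -/
def IsMST {V X : Type} [Fintype V] [DecidableEq V] [MetricSpace X]
    (T : ParentTree V) (f : V → X) : Prop :=
  ∀ T' : ParentTree V, treeWeight T f ≤ treeWeight T' f

/-- `a` and `v` are neighbours in `T`, i.e. joined by an edge of `T`. -/
def Nbr {V : Type} (T : ParentTree V) (a v : V) : Prop :=
  a ≠ v ∧ (T.parent a = v ∨ T.parent v = a)

namespace PT17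


variable {V : Type}

open Function

lemma eq_root_of_periodic (T : ParentTree V) {x : V} {j : ℕ} (hj : 0 < j)
    (hx : T.parent^[j] x = x) : x = T.root := by
  obtain ⟨k, hk⟩ := T.reaches_root x
  have hmul : ∀ m, T.parent^[m * j] x = x := by
    intro m
    induction m with
    | zero => simp
    | succ m ih =>
      rw [Nat.succ_mul, Function.iterate_add_apply, hx, ih]
  have hkey : T.parent^[k * j] x = T.root := by
    have h1 : k * j = (k * j - k) + k := (Nat.sub_add_cancel (Nat.le_mul_of_pos_right k hj)).symm
    rw [h1, Function.iterate_add_apply, hk, Function.iterate_fixed T.parent_root]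
  exact (hmul k).symm.trans hkey

lemma not_orbit (T : ParentTree V) {a v : V} (hpa : T.parent a = v) (hav : a ≠ v) :
    ∀ k, T.parent^[k] v ≠ a := by
  intro k h
  have hper : T.parent^[k + 1] a = a := by
    rw [Function.iterate_succ_apply, hpa, h]
  have hr := eq_root_of_periodic T (Nat.succ_pos k) hper
  apply hav
  rw [← hpa, hr, T.parent_root, ← hr]

lemma ne_root_of_parent_ne (T : ParentTree V) {a : V} (h : T.parent a ≠ a) : a ≠ T.root := by
  intro he; exact h (by rw [he, T.parent_root])


variable {V : Type} [DecidableEq V]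

/-- Construction A: reparent `a` to `b`. -/
def reparentA (T : ParentTree V) (a b : V) (ha : a ≠ T.root)
    (hb : ∀ k, T.parent^[k] b ≠ a) : ParentTree V where
  root := T.root
  parent := Function.update T.parent a b
  parent_root := by
    rw [Function.update_of_ne (Ne.symm ha), T.parent_root]
  reaches_root := by
    set p' := Function.update T.parent a b with hp'
    have hb' : ∀ k, p'^[k] b = T.parent^[k] b := by
      intro k
      induction k with
      | zero => rfl
      | succ k ih =>
        rw [Function.iterate_succ_apply', Function.iterate_succ_apply', ih,
          hp', Function.update_of_ne (hb k)]
    have hbr : ∃ m, p'^[m] b = T.root := by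
      obtain ⟨j, hj⟩ := T.reaches_root b
      exact ⟨j, by rw [hb' j, hj]⟩
    have main : ∀ k w, T.parent^[k] w = T.root → ∃ m, p'^[m] w = T.root := by
      intro k
      induction k with
      | zero => intro w hw; exact ⟨0, hw⟩
      | succ k ih =>
        intro w hw
        by_cases hwa : w = a
        · obtain ⟨m, hm⟩ := hbr
          refine ⟨m + 1, ?_⟩
          rw [Function.iterate_succ_apply, hwa, hp', Function.update_self, hm]
        · obtain ⟨m, hm⟩ := ih (T.parent w) (by rwa [Function.iterate_succ_apply] at hw)
          refine ⟨m + 1, ?_⟩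
          rw [Function.iterate_succ_apply, hp', Function.update_of_ne hwa, hm]
    intro w
    obtain ⟨k, hk⟩ := T.reaches_root w
    exact main k w hk


variable {V : Type} [DecidableEq V]

/-- Construction B: reverse edge a→v and reparent to b. -/
def reparentB (T : ParentTree V) (a v b : V) (hpa : T.parent a = v) (hpv : T.parent v = b)
    (hav : a ≠ v) (hvb : v ≠ b) : ParentTree V where
  root := T.root
  parent := Function.update (Function.update T.parent a b) v a
  parent_root := by
    have hv : v ≠ T.root := ne_root_of_parent_ne T (by rw [hpv]; exact fun h => hvb h.symm)
    have ha : a ≠ T.root := ne_root_of_parent_ne T (by rw [hpa]; exact fun h => hav h.symm)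
    rw [Function.update_of_ne (Ne.symm hv), Function.update_of_ne (Ne.symm ha), T.parent_root]
  reaches_root := by
    have horbv : ∀ k, T.parent^[k] b ≠ v := by
      intro k h
      have hper : T.parent^[k + 1] v = v := by
        rw [Function.iterate_succ_apply, hpv, h]
      have hr := eq_root_of_periodic T (Nat.succ_pos k) hper
      exact hvb (by rw [← hpv, hr, T.parent_root, ← hr])
    have horba : ∀ k, T.parent^[k] b ≠ a := by
      intro k h
      exact horbv (k + 1) (by rw [Function.iterate_succ_apply', h, hpa])
    set p' := Function.update (Function.update T.parent a b) v a with hp'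
    have hstep : ∀ w, w ≠ a → w ≠ v → p' w = T.parent w := by
      intro w h1 h2
      rw [hp', Function.update_of_ne h2, Function.update_of_ne h1]
    have hb' : ∀ k, p'^[k] b = T.parent^[k] b := by
      intro k
      induction k with
      | zero => rfl
      | succ k ih =>
        rw [Function.iterate_succ_apply', Function.iterate_succ_apply', ih,
          hstep _ (horba k) (horbv k)]
    have hbr : ∃ m, p'^[m] b = T.root := by
      obtain ⟨j, hj⟩ := T.reaches_root b
      exact ⟨j, by rw [hb' j, hj]⟩
    have hpa' : p' a = b := by
      rw [hp', Function.update_of_ne hav, Function.update_self]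
    have hpv' : p' v = a := by rw [hp', Function.update_self]
    have har : ∃ m, p'^[m] a = T.root := by
      obtain ⟨m, hm⟩ := hbr
      exact ⟨m + 1, by rw [Function.iterate_succ_apply, hpa', hm]⟩
    have hvr : ∃ m, p'^[m] v = T.root := by
      obtain ⟨m, hm⟩ := har
      exact ⟨m + 1, by rw [Function.iterate_succ_apply, hpv', hm]⟩
    have main : ∀ k w, T.parent^[k] w = T.root → ∃ m, p'^[m] w = T.root := by
      intro k
      induction k with
      | zero => intro w hw; exact ⟨0, hw⟩
      | succ k ih =>
        intro w hw
        by_cases hwa : w = a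
        · rw [hwa]; exact har
        · by_cases hwv : w = v
          · rw [hwv]; exact hvr
          · obtain ⟨m, hm⟩ := ih (T.parent w) (by rwa [Function.iterate_succ_apply] at hw)
            exact ⟨m + 1, by rw [Function.iterate_succ_apply, hstep _ hwa hwv, hm]⟩
    intro w
    obtain ⟨k, hk⟩ := T.reaches_root w
    exact main k w hk

variable {X : Type} [Fintype V] [MetricSpace X]

lemma exchangeA {T : ParentTree V} {f : V → X} (hmst : IsMST T f) {a v b : V}
    (hpa : T.parent a = v) (hav : a ≠ v) (hba : b ≠ a)
    (hb : ∀ k, T.parent^[k] b ≠ a) :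
    dist (f a) (f v) ≤ dist (f a) (f b) := by
  have ha : a ≠ T.root := ne_root_of_parent_ne T (by rw [hpa]; exact fun h => hav h.symm)
  set T' := reparentA T a b ha hb with hT'
  have hle := hmst T'
  have hroot : T'.root = T.root := rfl
  set g : V → ℝ := fun w => dist (f w) (f (T.parent w)) with hg
  have hfun : (fun w => dist (f w) (f (T'.parent w)))
      = Function.update g a (dist (f a) (f b)) := by
    funext w
    by_cases h : w = a
    · rw [h, Function.update_self]
      have : T'.parent a = b := by
        rw [hT']; show Function.update T.parent a b a = b; rw [Function.update_self]
      rw [this]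
    · rw [Function.update_of_ne h]
      have : T'.parent w = T.parent w := by
        rw [hT']; show Function.update T.parent a b w = T.parent w
        rw [Function.update_of_ne h]
      rw [this]
  have hmem : a ∈ Finset.univ.filter (fun w => w ≠ T.root) := by
    simp [ha]
  have hW' : treeWeight T' f = dist (f a) (f b)
      + ∑ w ∈ (Finset.univ.filter (fun w => w ≠ T.root)) \ {a}, g w := by
    unfold treeWeight
    rw [hroot, hfun, Finset.sum_update_of_mem hmem]
  have hW : treeWeight T f = ∑ w ∈ (Finset.univ.filter (fun w => w ≠ T.root)) \ {a}, g w
      + g a := by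
    unfold treeWeight
    exact Finset.sum_eq_sum_sdiff_singleton_add hmem g
  have hga : g a = dist (f a) (f v) := by rw [hg]; simp [hpa]
  rw [hW', hW, hga] at hle
  linarith

lemma exchangeB {T : ParentTree V} {f : V → X} (hmst : IsMST T f) {a v b : V}
    (hpa : T.parent a = v) (hpv : T.parent v = b) (hav : a ≠ v) (hvb : v ≠ b) :
    dist (f v) (f b) ≤ dist (f a) (f b) := by
  have ha : a ≠ T.root := ne_root_of_parent_ne T (by rw [hpa]; exact fun h => hav h.symm)
  have hv : v ≠ T.root := ne_root_of_parent_ne T (by rw [hpv]; exact fun h => hvb h.symm)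
  set T' := reparentB T a v b hpa hpv hav hvb with hT'
  have hle := hmst T'
  have hroot : T'.root = T.root := rfl
  set g : V → ℝ := fun w => dist (f w) (f (T.parent w)) with hg
  have hfun : (fun w => dist (f w) (f (T'.parent w)))
      = Function.update (Function.update g a (dist (f a) (f b))) v (dist (f v) (f a)) := by
    funext w
    by_cases h2 : w = v
    · rw [h2, Function.update_self]
      have : T'.parent v = a := by
        rw [hT']
        show Function.update (Function.update T.parent a b) v a v = a
        rw [Function.update_self]
      rw [this]
    · rw [Function.update_of_ne h2]
      by_cases h1 : w = a
      · rw [h1, Function.update_self]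
        have : T'.parent a = b := by
          rw [hT']
          show Function.update (Function.update T.parent a b) v a a = b
          rw [Function.update_of_ne hav, Function.update_self]
        rw [this]
      · rw [Function.update_of_ne h1]
        have : T'.parent w = T.parent w := by
          rw [hT']
          show Function.update (Function.update T.parent a b) v a w = T.parent w
          rw [Function.update_of_ne h2, Function.update_of_ne h1]
        rw [this]
  have hmemv : v ∈ Finset.univ.filter (fun w => w ≠ T.root) := by simp [hv]
  have hmema : a ∈ (Finset.univ.filter (fun w => w ≠ T.root)) \ {v} := by
    simp [ha, hav]
  have hW' : treeWeight T' f = dist (f v) (f a) + (dist (f a) (f b)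
      + ∑ w ∈ ((Finset.univ.filter (fun w => w ≠ T.root)) \ {v}) \ {a}, g w) := by
    unfold treeWeight
    rw [hroot, hfun, Finset.sum_update_of_mem hmemv, Finset.sum_update_of_mem hmema]
  have hW : treeWeight T f = (∑ w ∈ ((Finset.univ.filter (fun w => w ≠ T.root)) \ {v}) \ {a}, g w
      + g a) + g v := by
    unfold treeWeight
    rw [Finset.sum_eq_sum_sdiff_singleton_add hmemv g,
      Finset.sum_eq_sum_sdiff_singleton_add hmema g]
  have hga : g a = dist (f a) (f v) := by rw [hg]; simp [hpa]
  have hgv : g v = dist (f v) (f b) := by rw [hg]; simp [hpv]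
  rw [hW', hW, hga, hgv, dist_comm (f v) (f a)] at hle
  linarith

lemma key {T : ParentTree V} {f : V → X} (hmst : IsMST T f) {v a b : V}
    (hNa : Nbr T a v) (hNb : Nbr T b v) (hab : a ≠ b) :
    dist (f a) (f v) ≤ dist (f a) (f b) := by
  obtain ⟨hav, hca⟩ := hNa
  obtain ⟨hbv, hcb⟩ := hNb
  rcases hca with hpa | hpv
  · have hb : ∀ k, T.parent^[k] b ≠ a := by
      have hva : ∀ k, T.parent^[k] v ≠ a := not_orbit T hpa hav
      rcases hcb with hpb | hpv'
      · intro k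
        cases k with
        | zero => exact fun h => hab h.symm
        | succ k => rw [Function.iterate_succ_apply, hpb]; exact hva k
      · intro k
        rw [← hpv', ← Function.iterate_succ_apply]
        exact hva (k + 1)
    exact exchangeA hmst hpa hav (fun h => hab h.symm) hb
  · rcases hcb with hpb | hpv'
    · have := exchangeB hmst hpb hpv hbv (fun h => hav h.symm)
      rw [dist_comm (f v) (f a), dist_comm (f b) (f a)] at this
      exact this
    · exact absurd (hpv.symm.trans hpv') hab

lemma re_mul_conj {z w : ℂ} (hz : z ≠ 0) (hw : w ≠ 0) :
    (z * (starRingEnd ℂ) w).re = ‖z‖ * ‖w‖ * Real.cos (z.arg - w.arg) := by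
  have hz' : ‖z‖ ≠ 0 := by simpa using hz
  have hw' : ‖w‖ ≠ 0 := by simpa using hw
  have h1 : (z * (starRingEnd ℂ) w).re = z.re * w.re + z.im * w.im := by
    simp [Complex.mul_re, Complex.conj_re, Complex.conj_im]
  rw [h1, Real.cos_sub, Complex.cos_arg hz, Complex.cos_arg hw,
    Complex.sin_arg, Complex.sin_arg]
  field_simp

lemma abs_sub_sq' (z w : ℂ) :
    (‖z - w‖)^2
      = (‖z‖)^2 + (‖w‖)^2 - 2 * (z * (starRingEnd ℂ) w).re := by
  rw [Complex.sq_norm, Complex.sq_norm, Complex.sq_norm]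
  simp [Complex.normSq_apply, Complex.mul_re, Complex.conj_re, Complex.conj_im,
    Complex.sub_re, Complex.sub_im]
  ring

lemma hexagon (w : Fin 6 → ℂ) (hw0 : ∀ i, w i ≠ 0)
    (hd : ∀ i j, i ≠ j → ‖w i‖ ≤ ‖w i - w j‖) :
    ∃ σ : Equiv.Perm (Fin 6), ∃ ρ : ℝ, 0 < ρ ∧ (∀ i, ‖w (σ i)‖ = ρ) ∧
      (∀ i : Fin 6, ‖w (σ i) - w (σ (i + 1))‖ = ρ) := by
  set r : Fin 6 → ℝ := fun i => ‖w i‖ with hrdef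
  set α : Fin 6 → ℝ := fun i => (w i).arg with hαdef
  have hr : ∀ i, 0 < r i := fun i => by
    simpa [hrdef] using (norm_pos_iff.mpr (hw0 i))
  have hsq : ∀ i j, i ≠ j →
      2 * (r i * r j * Real.cos (α i - α j)) ≤ (r j)^2 := by
    intro i j h
    have h1 := hd i j h
    have h2 : (r i)^2 ≤ (‖w i - w j‖)^2 := by
      have := pow_le_pow_left₀ (norm_nonneg (w i)) h1 2
      simpa [hrdef] using this
    rw [abs_sub_sq', re_mul_conj (hw0 i) (hw0 j)] at h2
    have : 2 * (‖w i‖ * ‖w j‖ * Real.cos ((w i).arg - (w j).arg))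
        ≤ (‖w j‖)^2 := by linarith
    simpa [hrdef, hαdef] using this
  have hsymcos : ∀ i j, Real.cos (α j - α i) = Real.cos (α i - α j) := by
    intro i j; rw [← Real.cos_neg, neg_sub]
  have hcos : ∀ i j, i ≠ j → Real.cos (α i - α j) ≤ 1/2 := by
    intro i j h
    by_contra hc
    push_neg at hc
    have e1 := hsq i j h
    have e2 := hsq j i h.symm
    rw [hsymcos] at e2
    have hij := mul_pos (hr i) (hr j)
    have h1 : r i * r j < (r j)^2 := by nlinarith
    have h2 : r i * r j < (r i)^2 := by nlinarith
    have h3 : r i < r j := by nlinarith [hr j]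
    have h4 : r j < r i := by nlinarith [hr i]
    linarith
  have heq : ∀ i j, i ≠ j → Real.cos (α i - α j) = 1/2 →
      r i = r j ∧ ‖w i - w j‖ = r i := by
    intro i j h hc
    have e1 := hsq i j h
    have e2 := hsq j i h.symm
    rw [hsymcos] at e2
    rw [hc] at e1 e2
    have h3 : r i ≤ r j := by nlinarith [hr j]
    have h4 : r j ≤ r i := by nlinarith [hr i]
    have hrij : r i = r j := le_antisymm h3 h4
    refine ⟨hrij, ?_⟩
    have h5 : (‖w i - w j‖)^2 = (r i)^2 := by
      rw [abs_sub_sq', re_mul_conj (hw0 i) (hw0 j)]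
      have : Real.cos ((w i).arg - (w j).arg) = 1/2 := hc
      rw [this]
      have hri : ‖w i‖ = r i := rfl
      have hrj : ‖w j‖ = r j := rfl
      rw [hri, hrj, ← hrij]
      ring
    calc ‖w i - w j‖
        = Real.sqrt ((‖w i - w j‖)^2) :=
          (Real.sqrt_sq (norm_nonneg _)).symm
      _ = Real.sqrt ((r i)^2) := by rw [h5]
      _ = r i := Real.sqrt_sq (hr i).le
  -- arguments are pairwise distinct
  have hαinj : Function.Injective α := by
    intro i j hij
    by_contra hne
    have := hcos i j hne
    rw [hij, sub_self, Real.cos_zero] at this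
    norm_num at this
  set σ : Equiv.Perm (Fin 6) := Tuple.sort α with hσdef
  have hmono : Monotone (α ∘ σ) := Tuple.monotone_sort α
  have hinj : Function.Injective (α ∘ σ) := hαinj.comp σ.injective
  have hsm : StrictMono (α ∘ σ) := hmono.strictMono_of_injective hinj
  set β : Fin 6 → ℝ := α ∘ σ with hβdef
  have hβlt : ∀ i j : Fin 6, i < j → β i < β j := fun i j h => hsm h
  have hβcos : ∀ i j : Fin 6, i ≠ j → Real.cos (β i - β j) ≤ 1/2 := by
    intro i j h
    exact hcos _ _ (fun he => h (σ.injective he))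
  have hβle : ∀ i : Fin 6, -Real.pi < β i ∧ β i ≤ Real.pi := fun i =>
    ⟨Complex.neg_pi_lt_arg _, Complex.arg_le_pi _⟩
  have hgap : ∀ x y : ℝ, x < y → Real.cos (y - x) ≤ 1/2 → Real.pi/3 ≤ y - x := by
    intro x y hxy hc
    by_contra hlt
    push_neg at hlt
    have := Real.cos_lt_cos_of_nonneg_of_le_pi (le_of_lt (sub_pos.mpr hxy))
      (by linarith [Real.pi_pos] : Real.pi/3 ≤ Real.pi) hlt
    rw [Real.cos_pi_div_three] at this
    linarith
  have g01 : Real.pi/3 ≤ β 1 - β 0 := hgap _ _ (hβlt 0 1 (by decide)) (hβcos 1 0 (by decide))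
  have g12 : Real.pi/3 ≤ β 2 - β 1 := hgap _ _ (hβlt 1 2 (by decide)) (hβcos 2 1 (by decide))
  have g23 : Real.pi/3 ≤ β 3 - β 2 := hgap _ _ (hβlt 2 3 (by decide)) (hβcos 3 2 (by decide))
  have g34 : Real.pi/3 ≤ β 4 - β 3 := hgap _ _ (hβlt 3 4 (by decide)) (hβcos 4 3 (by decide))
  have g45 : Real.pi/3 ≤ β 5 - β 4 := hgap _ _ (hβlt 4 5 (by decide)) (hβcos 5 4 (by decide))
  have g50 : Real.pi/3 ≤ (β 0 + 2*Real.pi) - β 5 := by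
    apply hgap
    · linarith [(hβle 5).2, (hβle 0).1]
    · rw [show (β 0 + 2*Real.pi) - β 5 = (β 0 - β 5) + 2*Real.pi by ring,
        Real.cos_add_two_pi]
      exact hβcos 0 5 (by decide)
  have e01 : β 1 - β 0 = Real.pi/3 := by linarith
  have e12 : β 2 - β 1 = Real.pi/3 := by linarith
  have e23 : β 3 - β 2 = Real.pi/3 := by linarith
  have e34 : β 4 - β 3 = Real.pi/3 := by linarith
  have e45 : β 5 - β 4 = Real.pi/3 := by linarith
  have e50 : β 5 - β 0 = 5*Real.pi/3 := by linarith
  have hhalf : ∀ k l : Fin 6, β l - β k = Real.pi/3 → Real.cos (β k - β l) = 1/2 := by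
    intro k l h
    rw [show β k - β l = -(Real.pi/3) by linarith, Real.cos_neg, Real.cos_pi_div_three]
  have hne : ∀ k l : Fin 6, k ≠ l → σ k ≠ σ l := fun k l h he => h (σ.injective he)
  have q01 := heq (σ 0) (σ 1) (hne 0 1 (by decide)) (hhalf 0 1 e01)
  have q12 := heq (σ 1) (σ 2) (hne 1 2 (by decide)) (hhalf 1 2 e12)
  have q23 := heq (σ 2) (σ 3) (hne 2 3 (by decide)) (hhalf 2 3 e23)
  have q34 := heq (σ 3) (σ 4) (hne 3 4 (by decide)) (hhalf 3 4 e34)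
  have q45 := heq (σ 4) (σ 5) (hne 4 5 (by decide)) (hhalf 4 5 e45)
  have c50 : Real.cos (β 5 - β 0) = 1/2 := by
    rw [show β 5 - β 0 = -(Real.pi/3) + 2*Real.pi by linarith, Real.cos_add_two_pi,
      Real.cos_neg, Real.cos_pi_div_three]
  have q50 := heq (σ 5) (σ 0) (hne 5 0 (by decide)) c50
  refine ⟨σ, r (σ 0), hr (σ 0), ?_, ?_⟩
  · have h0 : r (σ 0) = r (σ 0) := rfl
    have h1 : r (σ 1) = r (σ 0) := q01.1.symm
    have h2 : r (σ 2) = r (σ 0) := q12.1.symm.trans h1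
    have h3 : r (σ 3) = r (σ 0) := q23.1.symm.trans h2
    have h4 : r (σ 4) = r (σ 0) := q34.1.symm.trans h3
    have h5 : r (σ 5) = r (σ 0) := q45.1.symm.trans h4
    intro i
    fin_cases i
    · exact h0
    · exact h1
    · exact h2
    · exact h3
    · exact h4
    · exact h5
  · have h1 : r (σ 1) = r (σ 0) := q01.1.symm
    have h2 : r (σ 2) = r (σ 0) := q12.1.symm.trans h1
    have h3 : r (σ 3) = r (σ 0) := q23.1.symm.trans h2
    have h4 : r (σ 4) = r (σ 0) := q34.1.symm.trans h3
    have h5 : r (σ 5) = r (σ 0) := q45.1.symm.trans h4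
    intro i
    fin_cases i
    · exact q01.2
    · exact q12.2.trans h1
    · exact q23.2.trans h2
    · exact q34.2.trans h3
    · exact q45.2.trans h4
    · exact q50.2.trans h5
end PT17

/-- If a vertex `v` of a planar Euclidean minimum spanning tree has exactly 6
neighbours, then they are six equidistant points forming a regular hexagon
around `v`: they can be ordered `n₁, …, n₆` so that for some `ρ > 0`,
`dist(v, nᵢ) = ρ` for all `i` and `dist(nᵢ, n_{i+1}) = ρ` (indices mod 6). -/
theorem stmt17 {V : Type} [Fintype V] [DecidableEq V]
    (hn : 3 ≤ Fintype.card V) (f : V → EuclideanSpace ℝ (Fin 2))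
    (hf : Function.Injective f)
    (T : ParentTree V) (hmst : IsMST T f) (v : V)
    (hdeg : {a : V | Nbr T a v}.ncard = 6) :
    ∃ g : Fin 6 → V, Function.Injective g ∧ Set.range g = {a : V | Nbr T a v} ∧
      ∃ ρ : ℝ, 0 < ρ ∧ (∀ i : Fin 6, dist (f v) (f (g i)) = ρ) ∧
        ∀ i : Fin 6, dist (f (g i)) (f (g (i + 1))) = ρ := by
  classical
  set s : Set V := {a : V | Nbr T a v} with hs
  have hfin : s.Finite := Set.toFinite s
  have hcard : hfin.toFinset.card = 6 := by
    rw [← Set.ncard_eq_toFinset_card _ hfin]; exact hdeg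
  have hcard' : Fintype.card hfin.toFinset = 6 := by
    rw [Fintype.card_coe]; exact hcard
  set e := Fintype.equivFinOfCardEq hcard' with he
  set n : Fin 6 → V := fun i => ((e.symm i : hfin.toFinset) : V) with hn
  have hninj : Function.Injective n := by
    intro i j h
    exact e.symm.injective (Subtype.ext h)
  have hmem : ∀ i, Nbr T (n i) v := by
    intro i
    have := (e.symm i).2
    rwa [Set.Finite.mem_toFinset] at this
  have hrange : Set.range n = s := by
    ext x
    constructor
    · rintro ⟨i, rfl⟩; exact hmem i
    · intro hx
      refine ⟨e ⟨x, hfin.mem_toFinset.mpr hx⟩, ?_⟩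
      rw [hn]
      simp
  set F : V → ℂ := fun x => Complex.orthonormalBasisOneI.repr.symm (f x) with hF
  have hdist : ∀ x y : V, dist (f x) (f y) = ‖F x - F y‖ := by
    intro x y
    rw [← Complex.dist_eq, hF]
    exact (LinearIsometryEquiv.dist_map _ (f x) (f y)).symm
  have hFinj : Function.Injective F := by
    intro x y h
    exact hf (Complex.orthonormalBasisOneI.repr.symm.injective h)
  set w : Fin 6 → ℂ := fun i => F (n i) - F v with hw
  have hw0 : ∀ i, w i ≠ 0 := by
    intro i h
    rw [hw] at h
    simp only [sub_eq_zero] at h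
    exact (hmem i).1 (hFinj h)
  have hdcond : ∀ i j, i ≠ j → ‖w i‖ ≤ ‖w i - w j‖ := by
    intro i j hij
    have h1 : ‖w i‖ = dist (f (n i)) (f v) := (hdist (n i) v).symm
    have h2 : w i - w j = F (n i) - F (n j) := by rw [hw]; ring
    have h3 : ‖w i - w j‖ = dist (f (n i)) (f (n j)) := by
      rw [h2]; exact (hdist (n i) (n j)).symm
    rw [h1, h3]
    exact PT17.key hmst (hmem i) (hmem j) (hninj.ne hij)
  obtain ⟨σ, ρ, hρ, hrad, hcons⟩ := PT17.hexagon w hw0 hdcond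
  refine ⟨fun i => n (σ i), hninj.comp σ.injective, ?_, ρ, hρ, ?_, ?_⟩
  · have : Set.range (fun i => n (σ i)) = Set.range n :=
      Function.Surjective.range_comp σ.surjective n
    rw [this, hrange]
  · intro i
    rw [hdist v (n (σ i)), show F v - F (n (σ i)) = -(w (σ i)) by rw [hw]; ring,
      norm_neg]
    exact hrad i
  · intro i
    rw [hdist (n (σ i)) (n (σ (i+1))),
      show F (n (σ i)) - F (n (σ (i+1))) = w (σ i) - w (σ (i+1)) by rw [hw]; ring]
    exact hcons i
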